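/- Let (X, Z) be a pair of Banach spaces with property (*) with constant C₀. Then for every subset A ⊆ X, every Lipschitz mapping f : A → Z with ‖f(x)‖ < R for all x ∈ A (0 < R < ∞), and every ε > 0, there exists a C¹ smooth Lipschitz mapping h : X → Z such that (i) ‖f(x) − h(x)‖ < ε for every x ∈ A, (ii) ‖h(x)‖ < C₀·Lip(f)^{1/2} + R + ε for every x ∈ X, and (iii) Lip(h) ≤ C₀((1 + 2C₀)·Lip(f) + 2(R + ε)·Lip(f)^{1/2}). -/

import Mathlib

noncomputable def tentA (s : ℝ) : ℝ := max 0 (2 - |4*s - 2|)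

lemma tentA_cont : Continuous tentA := by
  apply continuous_const.max
  fun_prop

lemma tentA_nonneg (s : ℝ) : 0 ≤ tentA s := le_max_left _ _

lemma tentA_le_two (s : ℝ) : tentA s ≤ 2 := by
  apply max_le (by norm_num)
  have := abs_nonneg (4*s - 2)
  linarith

lemma tentA_eq_zero {s : ℝ} (h : s ≤ 0 ∨ 1 ≤ s) : tentA s = 0 := by
  apply max_eq_left
  rcases h with h | h
  · rw [abs_of_nonpos (by linarith)]; linarith
  · rw [abs_of_nonneg (by linarith)]; linarith

lemma tentA_intble (a b : ℝ) : IntervalIntegrable tentA MeasureTheory.volume a b :=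
  tentA_cont.intervalIntegrable a b

noncomputable def psiA (t : ℝ) : ℝ := ∫ s in (0:ℝ)..t, tentA s

lemma psiA_contDiff : ContDiff ℝ 1 psiA := by
  rw [contDiff_one_iff_deriv]
  constructor
  · intro t
    exact ((tentA_cont.integral_hasStrictDerivAt 0 t).hasDerivAt).differentiableAt
  · have : deriv psiA = tentA := by
      funext t
      exact Continuous.deriv_integral tentA tentA_cont 0 t
    rw [this]; exact tentA_cont

lemma psiA_sub (a b : ℝ) : psiA b - psiA a = ∫ s in a..b, tentA s := by
  unfold psiA
  rw [← intervalIntegral.integral_add_adjacent_intervals (tentA_intble 0 a) (tentA_intble a b)]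
  ring

lemma psiA_mono : Monotone psiA := by
  intro a b hab
  have h := psiA_sub a b
  have : 0 ≤ ∫ s in a..b, tentA s :=
    intervalIntegral.integral_nonneg hab (fun s _ => tentA_nonneg s)
  linarith

lemma psiA_of_nonpos {t : ℝ} (h : t ≤ 0) : psiA t = 0 := by
  have h0 : psiA 0 = 0 := by simp [psiA]
  have := psiA_sub t 0
  rw [intervalIntegral.integral_congr (g := fun _ => (0:ℝ))
    (fun s hs => by
      apply tentA_eq_zero
      left
      rcases Set.mem_uIcc.mp hs with ⟨h1,h2⟩|⟨h1,h2⟩ <;> linarith)] at this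
  simp at this
  linarith

lemma psiA_one : psiA 1 = 1 := by
  have h0 : psiA 0 = 0 := by simp [psiA]
  have e1 : psiA (1/2) - psiA 0 = ∫ s in (0:ℝ)..(1/2), tentA s := psiA_sub 0 (1/2)
  have e2 : psiA 1 - psiA (1/2) = ∫ s in (1/2:ℝ)..1, tentA s := psiA_sub (1/2) 1
  have c1 : (∫ s in (0:ℝ)..(1/2), tentA s) = ∫ s in (0:ℝ)..(1/2), 4 * s := by
    apply intervalIntegral.integral_congr
    intro s hs
    rcases Set.mem_uIcc.mp hs with ⟨h1,h2⟩|⟨h1,h2⟩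
    · unfold tentA
      rw [abs_of_nonpos (by linarith)]
      rw [max_eq_right (by linarith)]; ring
    · norm_num at h1 h2; linarith
  have c2 : (∫ s in (1/2:ℝ)..1, tentA s) = ∫ s in (1/2:ℝ)..1, (4 - 4 * s) := by
    apply intervalIntegral.integral_congr
    intro s hs
    rcases Set.mem_uIcc.mp hs with ⟨h1,h2⟩|⟨h1,h2⟩
    · unfold tentA
      rw [abs_of_nonneg (by linarith)]
      rw [max_eq_right (by linarith)]; ring
    · norm_num at h1 h2; linarith
  have v1 : (∫ s in (0:ℝ)..(1/2), 4 * s) = 1/2 := by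
    rw [intervalIntegral.integral_const_mul, integral_id]; norm_num
  have v2 : (∫ s in (1/2:ℝ)..1, (4 - 4 * s)) = 1/2 := by
    have hi : IntervalIntegrable (fun s : ℝ => 4 * s) MeasureTheory.volume (1/2) 1 := by
      apply Continuous.intervalIntegrable; continuity
    rw [intervalIntegral.integral_sub intervalIntegrable_const hi,
      intervalIntegral.integral_const_mul, integral_id, intervalIntegral.integral_const]
    norm_num
  rw [c1, v1] at e1
  rw [c2, v2] at e2
  linarith

lemma psiA_of_one_le {t : ℝ} (h : 1 ≤ t) : psiA t = 1 := by
  have := psiA_sub 1 t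
  rw [intervalIntegral.integral_congr (g := fun _ => (0:ℝ))
    (fun s hs => by
      apply tentA_eq_zero
      right
      rcases Set.mem_uIcc.mp hs with ⟨h1,h2⟩|⟨h1,h2⟩ <;> linarith)] at this
  simp at this
  rw [psiA_one] at this
  linarith

lemma psiA_nonneg (t : ℝ) : 0 ≤ psiA t := by
  rcases le_total t 0 with h | h
  · rw [psiA_of_nonpos h]
  · have := psiA_mono h; rwa [psiA_of_nonpos le_rfl] at this

lemma psiA_le_one (t : ℝ) : psiA t ≤ 1 := by
  rcases le_total t 1 with h | h
  · have := psiA_mono h; rwa [psiA_of_one_le le_rfl] at this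
  · rw [psiA_of_one_le h]

lemma psiA_lip (a b : ℝ) : |psiA a - psiA b| ≤ 2 * |a - b| := by
  have := psiA_sub b a
  rw [this]
  have := intervalIntegral.norm_integral_le_of_norm_le_const (C := 2) (a := b) (b := a)
    (f := tentA) (fun s _ => by rw [Real.norm_eq_abs, abs_of_nonneg (tentA_nonneg s)]; exact tentA_le_two s)
  rw [Real.norm_eq_abs] at this
  exact this



set_option maxHeartbeats 1000000 in
/-- Lemma 2.3: under property (*) with constant `C₀`, a bounded Lipschitz map `f : A → B_Z(0,R)`
admits a `C¹` smooth Lipschitz approximation `h` on `X` which is globally bounded by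
`C₀·Lip(f)^{1/2} + R + ε` and has Lipschitz constant at most
`C₀((1+2C₀)·Lip(f) + 2(R+ε)·Lip(f)^{1/2})`. -/
theorem smooth_bounded_approximation_of_bounded_lipschitz
    {X Z : Type*} [NormedAddCommGroup X] [NormedSpace ℝ X] [CompleteSpace X]
    [NormedAddCommGroup Z] [NormedSpace ℝ Z] [CompleteSpace Z]
    (C₀ : ℝ) (hC₀ : 1 ≤ C₀)
    (hstar : ∀ (A : Set X) (f : X → Z) (L : ℝ), 0 ≤ L →
      (∀ x ∈ A, ∀ y ∈ A, ‖f x - f y‖ ≤ L * ‖x - y‖) →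
      ∀ ε > (0 : ℝ), ∃ g : X → Z, ContDiff ℝ 1 g ∧
        (∀ x ∈ A, ‖f x - g x‖ < ε) ∧ ∀ x y : X, ‖g x - g y‖ ≤ C₀ * L * ‖x - y‖)
    (A : Set X) (f : X → Z) (L R ε : ℝ) (hL : 0 < L) (hR : 0 < R) (hε : 0 < ε)
    (hf : ∀ x ∈ A, ∀ y ∈ A, ‖f x - f y‖ ≤ L * ‖x - y‖)
    (hfR : ∀ x ∈ A, ‖f x‖ < R) :
    ∃ h : X → Z, ContDiff ℝ 1 h ∧
      (∀ x ∈ A, ‖f x - h x‖ < ε) ∧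
      (∀ x : X, ‖h x‖ < C₀ * Real.sqrt L + R + ε) ∧
      (∀ x y : X, ‖h x - h y‖ ≤ C₀ * ((1 + 2 * C₀) * L + 2 * (R + ε) * Real.sqrt L) * ‖x - y‖) := by
  set sL := Real.sqrt L with hsLdef
  have hsL : 0 < sL := Real.sqrt_pos.mpr hL
  have hsL2 : sL * sL = L := Real.mul_self_sqrt hL.le
  have hC₀0 : 0 < C₀ := lt_of_lt_of_le one_pos hC₀
  have hKnn : 0 ≤ C₀ * ((1 + 2 * C₀) * L + 2 * (R + ε) * sL) := by
    apply mul_nonneg hC₀0.le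
    have h1 : 0 ≤ (1 + 2 * C₀) * L := by nlinarith
    have h2 : 0 ≤ 2 * (R + ε) * sL := by nlinarith
    linarith
  have hbndpos : 0 < C₀ * sL + R + ε := by nlinarith
  -- trivial cases
  rcases A.eq_empty_or_nonempty with rfl | hAne
  · refine ⟨0, contDiff_const, by simp, fun x => by simpa using hbndpos, fun x y => by
      simpa using mul_nonneg hKnn (norm_nonneg (x - y))⟩
  by_cases hZ : ∀ z : Z, z = 0
  · refine ⟨0, contDiff_const, fun x hx => by rw [hZ (f x)]; simpa using hε,
      fun x => by simpa using hbndpos, fun x y => by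
      simpa using mul_nonneg hKnn (norm_nonneg (x - y))⟩
  push_neg at hZ
  obtain ⟨z₀, hz₀⟩ := hZ
  set z : Z := ‖z₀‖⁻¹ • z₀ with hzdef
  have hz1 : ‖z‖ = 1 := by
    rw [hzdef, norm_smul, norm_inv, norm_norm]
    exact inv_mul_cancel₀ (norm_ne_zero_iff.mpr hz₀)
  have hzne : z ≠ 0 := by
    intro h; rw [h] at hz1; simp at hz1
  obtain ⟨φ, hφ1, hφz⟩ := exists_dual_vector ℝ z (norm_ne_zero_iff.mpr hzne)
  rw [hz1] at hφz
  norm_num at hφz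
  -- step 1 : smooth approximation g of f
  obtain ⟨g, hg1, hg2, hg3⟩ := hstar A f L hL.le hf (ε/2) (half_pos hε)
  -- parameters
  obtain ⟨M, hMdef⟩ : ∃ M : ℝ, M = C₀ * sL + R + ε/2 := ⟨_, rfl⟩
  have hM : 0 < M := by rw [hMdef]; nlinarith
  obtain ⟨δ, hδdef⟩ : ∃ δ : ℝ, δ = min (1/4) (ε / (4 * M + 2 * ε)) := ⟨_, rfl⟩
  have hδpos : 0 < δ := hδdef ▸ lt_min (by norm_num) (by rw [hMdef]; positivity)
  have hδ4 : δ ≤ 1/4 := hδdef ▸ min_le_left _ _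
  have hδM : 2 * δ * (M + ε/2) ≤ ε/2 := by
    have h1 : δ ≤ ε / (4 * M + 2 * ε) := hδdef ▸ min_le_right _ _
    have h2 : 0 < 4 * M + 2 * ε := by nlinarith
    rw [le_div_iff₀ h2] at h1
    calc 2 * δ * (M + ε/2) = (δ * (4 * M + 2 * ε)) / 2 := by ring
      _ ≤ ε/2 := by linarith
  have hc : (0:ℝ) < 1 - 2*δ := by linarith
  -- step 2 : smooth approximation of the distance function
  set d : X → ℝ := fun x => Metric.infDist x A with hddef
  have hd_lip : ∀ x y : X, |d x - d y| ≤ ‖x - y‖ := by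
    intro x y
    have := (Metric.lipschitz_infDist_pt A).dist_le_mul x y
    rwa [Real.dist_eq, dist_eq_norm, NNReal.coe_one, one_mul] at this
  set F : X → Z := fun x => (sL * d x) • z with hFdef
  have hFlip : ∀ x ∈ (Set.univ : Set X), ∀ y ∈ (Set.univ : Set X),
      ‖F x - F y‖ ≤ sL * ‖x - y‖ := by
    intro x _ y _
    rw [hFdef]
    simp only
    rw [← sub_smul, norm_smul, Real.norm_eq_abs, hz1, mul_one]
    have : sL * d x - sL * d y = sL * (d x - d y) := by ring
    rw [this, abs_mul, abs_of_pos hsL]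
    exact mul_le_mul_of_nonneg_left (hd_lip x y) hsL.le
  obtain ⟨G, hG1, hG2, hG3⟩ := hstar Set.univ F sL hsL.le hFlip δ hδpos
  set u : X → ℝ := fun x => φ (G x) with hudef
  have hu_cd : ContDiff ℝ 1 u := φ.contDiff.comp hG1
  have hu_lip : ∀ x y : X, |u x - u y| ≤ C₀ * sL * ‖x - y‖ := by
    intro x y
    have h1 : u x - u y = φ (G x - G y) := by rw [hudef]; simp
    rw [h1, ← Real.norm_eq_abs]
    calc ‖φ (G x - G y)‖ ≤ ‖φ‖ * ‖G x - G y‖ := φ.le_opNorm _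
      _ = ‖G x - G y‖ := by rw [hφ1, one_mul]
      _ ≤ C₀ * sL * ‖x - y‖ := hG3 x y
  have hu_approx : ∀ x : X, |u x - sL * d x| < δ := by
    intro x
    have h1 : φ (F x) = sL * d x := by
      rw [hFdef]; simp [hφz]
    have h2 : u x - sL * d x = φ (G x - F x) := by rw [hudef, ← h1]; simp
    rw [h2, ← Real.norm_eq_abs]
    calc ‖φ (G x - F x)‖ ≤ ‖φ‖ * ‖G x - F x‖ := φ.le_opNorm _
      _ = ‖F x - G x‖ := by rw [hφ1, one_mul, norm_sub_rev]
      _ < δ := hG2 x (Set.mem_univ x)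
  -- the cutoff
  set θ : X → ℝ := fun x => psiA ((1 - δ - u x) / (1 - 2*δ)) with hθdef
  have hθ_cd : ContDiff ℝ 1 θ := by
    apply psiA_contDiff.comp
    exact (contDiff_const.sub hu_cd).div_const _
  have hθ0 : ∀ x, 0 ≤ θ x := fun x => psiA_nonneg _
  have hθ1 : ∀ x, θ x ≤ 1 := fun x => psiA_le_one _
  have hθA : ∀ x ∈ A, θ x = 1 := by
    intro x hx
    have hdx : d x = 0 := Metric.infDist_zero_of_mem hx
    have := hu_approx x
    rw [hdx, mul_zero, sub_zero] at this
    have hux : u x ≤ δ := le_of_lt (lt_of_abs_lt this)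
    apply psiA_of_one_le
    rw [le_div_iff₀ hc]
    linarith
  have hθ_lip : ∀ x y : X, |θ x - θ y| ≤ 2 / (1 - 2*δ) * (C₀ * sL) * ‖x - y‖ := by
    intro x y
    calc |θ x - θ y| ≤ 2 * |(1 - δ - u x) / (1 - 2*δ) - (1 - δ - u y) / (1 - 2*δ)| :=
          psiA_lip _ _
      _ = 2 / (1 - 2*δ) * |u x - u y| := by
          rw [div_sub_div_same, abs_div, abs_of_pos hc]
          rw [show (1 - δ - u x) - (1 - δ - u y) = -(u x - u y) by ring, abs_neg]
          ring
      _ ≤ 2 / (1 - 2*δ) * (C₀ * sL * ‖x - y‖) := by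
          apply mul_le_mul_of_nonneg_left (hu_lip x y) (by positivity)
      _ = 2 / (1 - 2*δ) * (C₀ * sL) * ‖x - y‖ := by ring
  -- bound for g on the support of θ
  have hg_bound : ∀ x : X, θ x ≠ 0 → ‖g x‖ < M := by
    intro x hx
    have harg : 0 < (1 - δ - u x) / (1 - 2*δ) := by
      by_contra hcon
      push_neg at hcon
      exact hx (psiA_of_nonpos hcon)
    have hux : u x < 1 - δ := by
      rw [div_pos_iff] at harg
      rcases harg with ⟨h1, _⟩ | ⟨_, h2⟩
      · linarith
      · linarith
    have hdx : sL * d x < 1 := by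
      have := hu_approx x
      have := neg_lt_of_abs_lt this
      linarith
    have hdx' : d x < 1 / sL := by
      rw [lt_div_iff₀ hsL]
      linarith [mul_comm sL (d x)]
    obtain ⟨a, haA, hdist⟩ := (Metric.infDist_lt_iff hAne).mp hdx'
    have hga : ‖g a‖ < R + ε/2 := by
      have h1 : ‖g a‖ ≤ ‖f a‖ + ‖f a - g a‖ := by
        have := norm_sub_norm_le (f a) (g a)
        have := norm_sub_rev (f a) (g a)
        calc ‖g a‖ = ‖f a - (f a - g a)‖ := by congr 1; abel
          _ ≤ ‖f a‖ + ‖f a - g a‖ := norm_sub_le _ _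
      have := hfR a haA
      have := hg2 a haA
      linarith
    have hgxa : ‖g x - g a‖ ≤ C₀ * L * ‖x - a‖ := hg3 x a
    have hdist' : ‖x - a‖ < 1 / sL := by rwa [← dist_eq_norm]
    have h2 : C₀ * L * ‖x - a‖ < C₀ * L * (1 / sL) := by
      apply mul_lt_mul_of_pos_left hdist' (by positivity)
    have h3 : C₀ * L * (1 / sL) = C₀ * sL := by
      rw [← hsL2]; field_simp
    have h4 : ‖g x‖ ≤ ‖g a‖ + ‖g x - g a‖ := by
      calc ‖g x‖ = ‖g a + (g x - g a)‖ := by congr 1; abel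
        _ ≤ ‖g a‖ + ‖g x - g a‖ := norm_add_le _ _
    rw [hMdef]
    nlinarith
  -- the function h
  refine ⟨fun x => θ x • g x, hθ_cd.smul hg1, ?_, ?_, ?_⟩
  · intro x hx
    show ‖f x - θ x • g x‖ < ε
    rw [hθA x hx, one_smul]
    have := hg2 x hx
    linarith
  · intro x
    show ‖θ x • g x‖ < C₀ * sL + R + ε
    by_cases hx : θ x = 0
    · simp only [hx, zero_smul, norm_zero]
      exact hbndpos
    · have h1 : ‖θ x • g x‖ = |θ x| * ‖g x‖ := by rw [norm_smul, Real.norm_eq_abs]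
      rw [h1, abs_of_nonneg (hθ0 x)]
      have h2 : θ x * ‖g x‖ ≤ ‖g x‖ := by
        nlinarith [hθ0 x, hθ1 x, norm_nonneg (g x)]
      have := hg_bound x hx
      rw [hMdef] at this
      linarith
  · -- Lipschitz estimate
    have key : ∀ x y : X, θ y ≠ 0 →
        ‖θ x • g x - θ y • g y‖ ≤ C₀ * ((1 + 2 * C₀) * L + 2 * (R + ε) * sL) * ‖x - y‖ := by
      intro x y hy
      have hsplit : θ x • g x - θ y • g y = θ x • (g x - g y) + (θ x - θ y) • g y := by
        rw [smul_sub, sub_smul]; abel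
      have hgy := hg_bound y hy
      have h1 : ‖θ x • (g x - g y)‖ ≤ C₀ * L * ‖x - y‖ := by
        rw [norm_smul, Real.norm_eq_abs, abs_of_nonneg (hθ0 x)]
        calc θ x * ‖g x - g y‖ ≤ 1 * ‖g x - g y‖ :=
              mul_le_mul_of_nonneg_right (hθ1 x) (norm_nonneg _)
          _ = ‖g x - g y‖ := one_mul _
          _ ≤ C₀ * L * ‖x - y‖ := hg3 x y
      have h2 : ‖(θ x - θ y) • g y‖ ≤ 2 / (1 - 2*δ) * (C₀ * sL) * ‖x - y‖ * M := by
        rw [norm_smul, Real.norm_eq_abs]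
        have := mul_le_mul (hθ_lip x y) hgy.le (norm_nonneg (g y))
          (by positivity)
        linarith [this]
      have hbudget : 2 / (1 - 2*δ) * M ≤ 2 * (M + ε/2) := by
        rw [div_mul_eq_mul_div, div_le_iff₀ hc]
        nlinarith
      have hKexp : C₀ * ((1 + 2 * C₀) * L + 2 * (R + ε) * sL)
          = C₀ * L + 2 * (M + ε/2) * (C₀ * sL) := by
        rw [hMdef]
        linear_combination (-2*C₀^2) * hsL2
      calc ‖θ x • g x - θ y • g y‖ ≤ ‖θ x • (g x - g y)‖ + ‖(θ x - θ y) • g y‖ := by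
            rw [hsplit]; exact norm_add_le _ _
        _ ≤ C₀ * L * ‖x - y‖ + 2 / (1 - 2*δ) * (C₀ * sL) * ‖x - y‖ * M := by linarith
        _ ≤ C₀ * L * ‖x - y‖ + 2 * (M + ε/2) * (C₀ * sL) * ‖x - y‖ := by
            have hnn : 0 ≤ (C₀ * sL) * ‖x - y‖ := by positivity
            nlinarith [norm_nonneg (x - y)]
        _ = (C₀ * L + 2 * (M + ε/2) * (C₀ * sL)) * ‖x - y‖ := by ring
        _ = C₀ * ((1 + 2 * C₀) * L + 2 * (R + ε) * sL) * ‖x - y‖ := by rw [hKexp]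
    intro x y
    show ‖θ x • g x - θ y • g y‖ ≤ _
    by_cases hy : θ y = 0
    · by_cases hx : θ x = 0
      · simp only [hx, hy, zero_smul, sub_zero, norm_zero]
        exact mul_nonneg hKnn (norm_nonneg _)
      · rw [norm_sub_rev]
        calc ‖θ y • g y - θ x • g x‖ ≤ C₀ * ((1 + 2 * C₀) * L + 2 * (R + ε) * sL) * ‖y - x‖ :=
              key y x hx
          _ = C₀ * ((1 + 2 * C₀) * L + 2 * (R + ε) * sL) * ‖x - y‖ := by rw [norm_sub_rev]
    · exact key x y hy
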